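/- The Clifford spectrum of the triple of Pauli matrices (σ_x, σ_y, σ_z) is the unit sphere in ℝ³; moreover, the smallest singular value of the localizer satisfies μ_λ^C(σ_x, σ_y, σ_z) = | |λ| - 1 | for all λ ∈ ℝ³. -/

import Mathlib

open scoped Kronecker Matrix
set_option maxHeartbeats 1000000

/-- Smallest singular value of a complex matrix. -/
noncomputable def smin {ι : Type*} [Fintype ι] [DecidableEq ι]
    (M : Matrix ι ι ℂ) : ℝ :=
  sInf ((fun x : EuclideanSpace ℂ ι => ‖Matrix.toEuclideanLin M x‖) '' Metric.sphere 0 1)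

noncomputable def sx : Matrix (Fin 2) (Fin 2) ℂ := !![0, 1; 1, 0]
noncomputable def sy : Matrix (Fin 2) (Fin 2) ℂ := !![0, -Complex.I; Complex.I, 0]
noncomputable def sz : Matrix (Fin 2) (Fin 2) ℂ := !![1, 0; 0, -1]
noncomputable def pauli : Fin 3 → Matrix (Fin 2) (Fin 2) ℂ := ![sx, sy, sz]

namespace CliffordPauli

open Complex

noncomputable def Ldef (a b c : ℝ) : Matrix (Fin 2 × Fin 2) (Fin 2 × Fin 2) ℂ :=
  Matrix.of fun p q =>
    (!![1 - c, -(a - b*Complex.I), 0, 0;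
        -(a + b*Complex.I), c - 1, 2, 0;
        0, 2, -1 - c, -(a - b*Complex.I);
        0, 0, -(a + b*Complex.I), 1 + c] : Matrix (Fin 4) (Fin 4) ℂ)
      ⟨2*p.1.val + p.2.val, by omega⟩ ⟨2*q.1.val + q.2.val, by omega⟩

lemma sum_eq_Ldef (lam : EuclideanSpace ℝ (Fin 3)) :
    (∑ j, ((pauli j - (lam j : ℂ) • 1) ⊗ₖ pauli j)) = Ldef (lam 0) (lam 1) (lam 2) := by
  ext ⟨i, k⟩ ⟨j, l⟩
  simp only [Fin.sum_univ_three, pauli]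
  fin_cases i <;> fin_cases k <;> fin_cases j <;> fin_cases l <;>
    simp [Ldef, sx, sy, sz, Matrix.kroneckerMap_apply, Matrix.one_apply,
      Matrix.vecHead, Matrix.vecTail] <;> ring

noncomputable def qform (a b c r : ℝ) (u w : ℂ) : ℝ :=
  (r-c) * Complex.normSq u + (r+c) * Complex.normSq w
    - 2 * (((a - b*Complex.I) * (starRingEnd ℂ u) * w).re)

lemma qform_nonneg (a b c r : ℝ) (hr0 : 0 ≤ r) (hr : r^2 = a^2+b^2+c^2) (u w : ℂ) :
    0 ≤ qform a b c r u w := by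
  have hc1 : 0 ≤ r - c := by nlinarith [sq_nonneg (r - c), sq_nonneg (r + c), sq_nonneg a, sq_nonneg b]
  have hc2 : 0 ≤ r + c := by nlinarith [sq_nonneg (r - c), sq_nonneg (r + c), sq_nonneg a, sq_nonneg b]
  set m : ℂ := (a : ℂ) - b * Complex.I with hm
  have hmabs : ‖m‖ ^ 2 = a^2 + b^2 := by
    rw [Complex.sq_norm, hm]
    simp [Complex.normSq_apply]
    ring
  have hre : ((m * (starRingEnd ℂ u) * w).re) ≤ ‖m‖ * ‖u‖ * ‖w‖ := by
    calc (m * (starRingEnd ℂ u) * w).re ≤ ‖m * (starRingEnd ℂ u) * w‖ :=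
          Complex.re_le_norm _
      _ = ‖m‖ * ‖u‖ * ‖w‖ := by
          simp [map_mul]
  have h1 : Complex.normSq u = ‖u‖ ^ 2 := (Complex.sq_norm u).symm
  have h2 : Complex.normSq w = ‖w‖ ^ 2 := (Complex.sq_norm w).symm
  have hA : 0 ≤ ‖u‖ := norm_nonneg u
  have hW : 0 ≤ ‖w‖ := norm_nonneg w
  have hM : 0 ≤ ‖m‖ := norm_nonneg m
  have key : 2 * (‖m‖ * ‖u‖ * ‖w‖)
      ≤ (r - c) * ‖u‖ ^ 2 + (r + c) * ‖w‖ ^ 2 := by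
    have hprod : (r - c) * (r + c) = ‖m‖ ^ 2 := by nlinarith
    have hXnn : 0 ≤ (r - c) * ‖u‖ ^ 2 + (r + c) * ‖w‖ ^ 2 :=
      add_nonneg (mul_nonneg hc1 (sq_nonneg _)) (mul_nonneg hc2 (sq_nonneg _))
    have hYnn : 0 ≤ 2 * (‖m‖ * ‖u‖ * ‖w‖) := by positivity
    have e0 : (2 * (‖m‖ * ‖u‖ * ‖w‖))^2
        = 4 * ((r-c)*(r+c)) * (‖u‖ ^2 * ‖w‖ ^2) := by
      calc (2 * (‖m‖ * ‖u‖ * ‖w‖))^2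
          = 4 * ‖m‖ ^2 * (‖u‖ ^2 * ‖w‖ ^2) := by ring
        _ = 4 * ((r-c)*(r+c)) * (‖u‖ ^2 * ‖w‖ ^2) := by rw [hprod]
    have e1 : (2 * (‖m‖ * ‖u‖ * ‖w‖))^2
        ≤ ((r - c) * ‖u‖ ^ 2 + (r + c) * ‖w‖ ^ 2)^2 := by
      nlinarith [sq_nonneg ((r - c) * ‖u‖ ^ 2 - (r + c) * ‖w‖ ^ 2), e0]
    exact (pow_le_pow_iff_left₀ hYnn hXnn (by norm_num)).mp e1
  simp only [qform, h1, h2]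
  nlinarith [hre, key]

lemma key_core (a b c r : ℝ) (hr : r^2 = a^2+b^2+c^2) (u v w z : ℂ) :
    normSq ((1-(c:ℂ))*u - ((a:ℂ) - b*I)*v)
    + normSq (-(((a:ℂ) + b*I))*u + ((c:ℂ)-1)*v + 2*w)
    + normSq (2*v - (1+(c:ℂ))*w - ((a:ℂ) - b*I)*z)
    + normSq (-(((a:ℂ) + b*I))*w + (1+(c:ℂ))*z)
    = (1-r)^2 * (normSq u + normSq v + normSq w + normSq z)
      + 4 * normSq (v - w) + 2 * qform a b c r u w + 2 * qform a b c r v z := by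
  simp only [qform, Complex.normSq_apply, Complex.add_re, Complex.add_im, Complex.sub_re,
    Complex.sub_im, Complex.mul_re, Complex.mul_im, Complex.ofReal_re, Complex.ofReal_im,
    Complex.I_re, Complex.I_im, Complex.one_re, Complex.one_im, Complex.neg_re,
    Complex.neg_im, Complex.zero_re, Complex.zero_im, Complex.re_ofNat, Complex.im_ofNat,
    Complex.conj_re, Complex.conj_im]
  linear_combination (-1) * (u.re^2 + u.im^2 + v.re^2 + v.im^2 + w.re^2 + w.im^2
    + z.re^2 + z.im^2) * hr

lemma mulVec00 (a b c : ℝ) (x : Fin 2 × Fin 2 → ℂ) :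
    (Ldef a b c).mulVec x (0,0) = (1-(c:ℂ)) * x (0,0) - ((a:ℂ) - b*I) * x (0,1) := by
  simp [Ldef, Matrix.mulVec, dotProduct, Fintype.sum_prod_type, Fin.sum_univ_two,
    Matrix.vecHead, Matrix.vecTail] <;> ring

lemma mulVec01 (a b c : ℝ) (x : Fin 2 × Fin 2 → ℂ) :
    (Ldef a b c).mulVec x (0,1) = -(((a:ℂ) + b*I)) * x (0,0) + ((c:ℂ)-1) * x (0,1) + 2 * x (1,0) := by
  simp [Ldef, Matrix.mulVec, dotProduct, Fintype.sum_prod_type, Fin.sum_univ_two,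
    Matrix.vecHead, Matrix.vecTail] <;> ring

lemma mulVec10 (a b c : ℝ) (x : Fin 2 × Fin 2 → ℂ) :
    (Ldef a b c).mulVec x (1,0) = 2 * x (0,1) - (1+(c:ℂ)) * x (1,0) - ((a:ℂ) - b*I) * x (1,1) := by
  simp [Ldef, Matrix.mulVec, dotProduct, Fintype.sum_prod_type, Fin.sum_univ_two,
    Matrix.vecHead, Matrix.vecTail] <;> ring

lemma mulVec11 (a b c : ℝ) (x : Fin 2 × Fin 2 → ℂ) :
    (Ldef a b c).mulVec x (1,1) = -(((a:ℂ) + b*I)) * x (1,0) + (1+(c:ℂ)) * x (1,1) := by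
  simp [Ldef, Matrix.mulVec, dotProduct, Fintype.sum_prod_type, Fin.sum_univ_two,
    Matrix.vecHead, Matrix.vecTail] <;> ring

lemma key_identity (a b c r : ℝ) (hr : r^2 = a^2+b^2+c^2) (x : Fin 2 × Fin 2 → ℂ) :
    ∑ p, Complex.normSq ((Ldef a b c).mulVec x p)
      = (1-r)^2 * ∑ p, Complex.normSq (x p)
        + 4 * Complex.normSq (x (0,1) - x (1,0))
        + 2 * qform a b c r (x (0,0)) (x (1,0))
        + 2 * qform a b c r (x (0,1)) (x (1,1)) := by
  rw [Fintype.sum_prod_type, Fintype.sum_prod_type]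
  simp only [Fin.sum_univ_two]
  rw [mulVec00, mulVec01, mulVec10, mulVec11]
  have := key_core a b c r hr (x (0,0)) (x (0,1)) (x (1,0)) (x (1,1))
  linarith [this]

lemma lower_bound (a b c r : ℝ) (hr0 : 0 ≤ r) (hr : r^2 = a^2+b^2+c^2)
    (x : Fin 2 × Fin 2 → ℂ) :
    (1-r)^2 * ∑ p, Complex.normSq (x p) ≤ ∑ p, Complex.normSq ((Ldef a b c).mulVec x p) := by
  rw [key_identity a b c r hr x]
  have q1 := qform_nonneg a b c r hr0 hr (x (0,0)) (x (1,0))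
  have q2 := qform_nonneg a b c r hr0 hr (x (0,1)) (x (1,1))
  have q3 := Complex.normSq_nonneg (x (0,1) - x (1,0))
  linarith

lemma mulVec_eq_of_components (a b c : ℝ) (x y : Fin 2 × Fin 2 → ℂ)
    (h00 : (Ldef a b c).mulVec x (0,0) = y (0,0))
    (h01 : (Ldef a b c).mulVec x (0,1) = y (0,1))
    (h10 : (Ldef a b c).mulVec x (1,0) = y (1,0))
    (h11 : (Ldef a b c).mulVec x (1,1) = y (1,1)) :
    (Ldef a b c).mulVec x = y := by
  funext p
  obtain ⟨i, k⟩ := p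
  fin_cases i <;> fin_cases k <;> assumption

lemma exists_unit_eigen (a b c r : ℝ) (hr0 : 0 ≤ r) (hr : r^2 = a^2+b^2+c^2) :
    ∃ x : Fin 2 × Fin 2 → ℂ, (∑ p, Complex.normSq (x p)) = 1 ∧
      (Ldef a b c).mulVec x = (((1 - r : ℝ)) : ℂ) • x := by
  have hrC : (r:ℂ)^2 = (a:ℂ)^2 + (b:ℂ)^2 + (c:ℂ)^2 := by
    have := congrArg (Complex.ofReal) hr
    push_cast at this
    exact_mod_cast this
  by_cases hab : a = 0 ∧ b = 0
  · obtain ⟨ha, hb⟩ := hab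
    subst ha; subst hb
    by_cases hc : 0 ≤ c
    · have hrc : r = c := by nlinarith
      subst hrc
      refine ⟨fun p => if p = (0,0) then 1 else 0, by
        rw [Fintype.sum_prod_type]; simp [Fin.sum_univ_two, Finset.filter_eq'], ?_⟩
      refine mulVec_eq_of_components 0 0 r _ _ ?_ ?_ ?_ ?_
      · rw [mulVec00]; norm_num
      · rw [mulVec01]; norm_num
      · rw [mulVec10]; norm_num
      · rw [mulVec11]; norm_num
    · have hrc : r = -c := by nlinarith
      subst hrc
      refine ⟨fun p => if p = (1,1) then 1 else 0, by
        rw [Fintype.sum_prod_type]; simp [Fin.sum_univ_two, Finset.filter_eq'], ?_⟩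
      refine mulVec_eq_of_components 0 0 c _ _ ?_ ?_ ?_ ?_
      · rw [mulVec00]; norm_num
      · rw [mulVec01]; norm_num
      · rw [mulVec10]; norm_num
      · rw [mulVec11]; norm_num
  · -- generic case : a ≠ 0 or b ≠ 0
    have hab2 : 0 < a^2 + b^2 := by
      rcases not_and_or.mp hab with h | h <;> positivity
    have hD : 0 < r^2 - c^2 := by nlinarith
    have hrpos : 0 < r := by nlinarith
    set D : ℝ := r^2 - c^2 with hDdef
    set t : ℝ := 1 / (2 * r * Real.sqrt D) with ht
    have hsD : Real.sqrt D ^ 2 = D := Real.sq_sqrt hD.le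
    have hsDpos : 0 < Real.sqrt D := Real.sqrt_pos.mpr hD
    set v : Fin 2 × Fin 2 → ℂ := fun p =>
      ![![((a:ℂ) - b*I) * ((r:ℂ) + c), ((D:ℝ) : ℂ)],
        ![((D:ℝ) : ℂ), ((a:ℂ) + b*I) * ((r:ℂ) - c)]] p.1 p.2 with hv
    have hv00 : v (0,0) = ((a:ℂ) - b*I) * ((r:ℂ) + c) := rfl
    have hv01 : v (0,1) = ((D:ℝ) : ℂ) := rfl
    have hv10 : v (1,0) = ((D:ℝ) : ℂ) := rfl
    have hv11 : v (1,1) = ((a:ℂ) + b*I) * ((r:ℂ) - c) := rfl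
    refine ⟨fun p => (t : ℂ) * v p, ?_, ?_⟩
    · rw [Fintype.sum_prod_type]
      simp only [Fin.sum_univ_two, Complex.normSq_mul]
      rw [hv00, hv01, hv10, hv11]
      have n1 : Complex.normSq (((a:ℂ) - b*I) * ((r:ℂ) + c)) = (a^2+b^2) * (r+c)^2 := by
        simp [Complex.normSq_mul, Complex.normSq_apply]; ring
      have n2 : Complex.normSq (((a:ℂ) + b*I) * ((r:ℂ) - c)) = (a^2+b^2) * (r-c)^2 := by
        simp [Complex.normSq_mul, Complex.normSq_apply]; ring
      have n3 : Complex.normSq ((D:ℝ) : ℂ) = D^2 := by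
        simp [Complex.normSq_apply]; ring
      have n4 : Complex.normSq ((t:ℝ) : ℂ) = t^2 := by
        simp [Complex.normSq_apply]; ring
      rw [n1, n2, n3, n4]
      have habD : a^2 + b^2 = D := by rw [hDdef]; nlinarith
      rw [habD]
      have ht2 : t^2 = 1 / (4 * r^2 * D) := by
        rw [ht]
        rw [div_pow, one_pow, mul_pow, mul_pow, hsD]
        norm_num
      rw [ht2]
      field_simp
      ring
    · have lin : (Ldef a b c).mulVec (fun p => (t:ℂ) * v p) =
          fun p => (t:ℂ) * ((Ldef a b c).mulVec v p) := by
        funext p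
        simp [Matrix.mulVec, dotProduct, Finset.mul_sum]
        congr 1; funext q; ring
      rw [lin]
      have hprod : ((a:ℂ)+b*Complex.I) * ((a:ℂ)-b*Complex.I) = ((r:ℂ)^2 - (c:ℂ)^2) := by
        linear_combination (-1) * hrC - ((b:ℂ)^2) * Complex.I_sq
      have main : (Ldef a b c).mulVec v = (((1 - r : ℝ)) : ℂ) • v := by
        refine mulVec_eq_of_components a b c v _ ?_ ?_ ?_ ?_
        · rw [mulVec00, hv00, hv01]
          simp only [Pi.smul_apply, smul_eq_mul, hv00]
          push_cast [hDdef]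
          ring
        · rw [mulVec01, hv00, hv01, hv10]
          simp only [Pi.smul_apply, smul_eq_mul, hv01]
          push_cast [hDdef]
          linear_combination (-((r:ℂ)+c)) * hprod
        · rw [mulVec10, hv01, hv10, hv11]
          simp only [Pi.smul_apply, smul_eq_mul, hv10]
          push_cast [hDdef]
          linear_combination (-((r:ℂ)-c)) * hprod
        · rw [mulVec11, hv10, hv11]
          simp only [Pi.smul_apply, smul_eq_mul, hv11]
          push_cast [hDdef]
          ring
      funext p
      rw [main]
      simp only [Pi.smul_apply, smul_eq_mul]
      ring

lemma norm_sq_eq (y : EuclideanSpace ℂ (Fin 2 × Fin 2)) :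
    ‖y‖^2 = ∑ p, Complex.normSq (y p) := by
  rw [EuclideanSpace.norm_eq, Real.sq_sqrt (by positivity)]
  congr 1
  funext p
  rw [Complex.sq_norm]

lemma smin_Ldef (a b c r : ℝ) (hr0 : 0 ≤ r) (hr : r^2 = a^2+b^2+c^2) :
    smin (Ldef a b c) = |r - 1| := by
  have lower : ∀ x : EuclideanSpace ℂ (Fin 2 × Fin 2), x ∈ Metric.sphere 0 1 →
      |r - 1| ≤ ‖Matrix.toEuclideanLin (Ldef a b c) x‖ := by
    intro x hx
    have hx1 : ‖x‖ = 1 := by rwa [mem_sphere_zero_iff_norm] at hx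
    have hsum : ∑ p, Complex.normSq (x p) = 1 := by
      rw [← norm_sq_eq, hx1]; norm_num
    have hcomp : ∀ p, (Matrix.toEuclideanLin (Ldef a b c) x) p
        = (Ldef a b c).mulVec (fun q => x q) p := fun _ => rfl
    have hnormL : ‖Matrix.toEuclideanLin (Ldef a b c) x‖^2
        = ∑ p, Complex.normSq ((Ldef a b c).mulVec (fun q => x q) p) := by
      rw [norm_sq_eq]
      exact Finset.sum_congr rfl fun p _ => by rw [hcomp]
    have hineq := lower_bound a b c r hr0 hr (fun q => x q)
    rw [hsum, mul_one] at hineq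
    have h2 : |r - 1|^2 ≤ ‖Matrix.toEuclideanLin (Ldef a b c) x‖^2 := by
      rw [hnormL, _root_.sq_abs]
      calc (r-1)^2 = (1-r)^2 := by ring
        _ ≤ _ := hineq
    exact (pow_le_pow_iff_left₀ (abs_nonneg _) (norm_nonneg _) (two_ne_zero)).mp h2
  obtain ⟨x0, hx0norm, hx0eig⟩ := exists_unit_eigen a b c r hr0 hr
  set xE : EuclideanSpace ℂ (Fin 2 × Fin 2) := (WithLp.equiv 2 _).symm x0 with hxE
  have hxEnorm : ‖xE‖ = 1 := by
    have h : ‖xE‖^2 = 1 := by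
      rw [norm_sq_eq]
      exact hx0norm
    have := norm_nonneg xE
    nlinarith
  have hxEsphere : xE ∈ Metric.sphere (0 : EuclideanSpace ℂ (Fin 2 × Fin 2)) 1 := by
    rwa [mem_sphere_zero_iff_norm]
  have hval : ‖Matrix.toEuclideanLin (Ldef a b c) xE‖ = |r - 1| := by
    have heq : Matrix.toEuclideanLin (Ldef a b c) xE = (((1 - r : ℝ)) : ℂ) • xE := by
      ext p
      show (Ldef a b c).mulVec x0 p = ((((1 - r : ℝ)) : ℂ) • xE) p
      rw [hx0eig]
      rfl
    rw [heq, norm_smul, hxEnorm, mul_one, Complex.norm_real, Real.norm_eq_abs,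
      abs_sub_comm]
  apply le_antisymm
  · exact csInf_le ⟨0, fun y ⟨x, _, hxy⟩ => hxy ▸ norm_nonneg _⟩
      ⟨xE, hxEsphere, hval⟩
  · exact le_csInf ⟨_, ⟨xE, hxEsphere, rfl⟩⟩ fun y ⟨x, hx, hxy⟩ => hxy ▸ lower x hx

lemma norm_sq_lam (lam : EuclideanSpace ℝ (Fin 3)) :
    ‖lam‖^2 = (lam 0)^2 + (lam 1)^2 + (lam 2)^2 := by
  rw [EuclideanSpace.norm_eq, Real.sq_sqrt (by positivity), Fin.sum_univ_three]
  simp [Real.norm_eq_abs, sq_abs]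

lemma main_value (lam : EuclideanSpace ℝ (Fin 3)) :
    smin (∑ j, ((pauli j - (lam j : ℂ) • 1) ⊗ₖ pauli j)) = |‖lam‖ - 1| := by
  rw [sum_eq_Ldef lam]
  exact smin_Ldef (lam 0) (lam 1) (lam 2) ‖lam‖ (norm_nonneg _) (norm_sq_lam lam)

end CliffordPauli

theorem clifford_spectrum_of_pauli_matrices :
    (∀ lam : EuclideanSpace ℝ (Fin 3),
      smin (∑ j, ((pauli j - (lam j : ℂ) • 1) ⊗ₖ pauli j)) = |‖lam‖ - 1|) ∧
    {lam : EuclideanSpace ℝ (Fin 3) |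
      smin (∑ j, ((pauli j - (lam j : ℂ) • 1) ⊗ₖ pauli j)) = 0} =
      Metric.sphere 0 1 := by
  refine ⟨CliffordPauli.main_value, ?_⟩
  ext lam
  simp only [Set.mem_setOf_eq, CliffordPauli.main_value lam, abs_eq_zero, sub_eq_zero,
    mem_sphere_zero_iff_norm]
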